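/- arXiv:2403.17663 — 2 statements merged into one kernel-verified Lean document; each statement's English description precedes it below -/
import Mathlib

section
/- For every killing rate κ with 0 < κ < 1, the Green's function at the origin satisfies G^{o,o} ≤ (log κ^{−1})/π + 2. -/
open scoped Real

/-- Graph (L¹) distance of `x ∈ ℤ²` from the origin: `|x₁| + |x₂|`. -/
def gnorm (x : ℤ × ℤ) : ℕ := x.1.natAbs + x.2.natAbs

/-- `W n x` is the number of nearest-neighbour walks of length `n` in `ℤ²`
from the origin `o = (0,0)` to `x`, i.e. the number of sequences
`(v₀, …, v_n)` with `v₀ = o`, `v_n = x` and `|v_{i+1} − v_i| = 1` for all `i`. -/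
noncomputable def W (n : ℕ) (x : ℤ × ℤ) : ℕ :=
  Set.ncard {v : Fin (n + 1) → ℤ × ℤ |
    v 0 = (0, 0) ∧ v (Fin.last n) = x ∧
    ∀ i : Fin n, gnorm (v i.succ - v i.castSucc) = 1}


private lemma sum_steps {n : ℕ} (v : Fin (n + 1) → ℤ × ℤ) :
    ∑ i : Fin n, (v i.succ - v i.castSucc) = v (Fin.last n) - v 0 := by
  classical
  have key : ∀ m : ℕ, ∀ h : m ≤ n,
      ∑ i ∈ Finset.univ.filter (fun i : Fin n => (i : ℕ) < m), (v i.succ - v i.castSucc)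
        = v ⟨m, by omega⟩ - v 0 := by
    intro m
    induction m with
    | zero => intro h; simp
    | succ m ih =>
      intro h
      have hm : m ≤ n := by omega
      have hset : Finset.univ.filter (fun i : Fin n => (i : ℕ) < m + 1)
          = insert (⟨m, by omega⟩ : Fin n) (Finset.univ.filter (fun i : Fin n => (i : ℕ) < m)) := by
        ext i
        simp only [Finset.mem_filter, Finset.mem_univ, true_and, Finset.mem_insert,
          Fin.ext_iff]
        omega
      rw [hset, Finset.sum_insert (by simp), ih hm]
      have h1 : (⟨m, by omega⟩ : Fin n).succ = (⟨m + 1, by omega⟩ : Fin (n + 1)) := rfl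
      have h2 : (⟨m, by omega⟩ : Fin n).castSucc = (⟨m, by omega⟩ : Fin (n + 1)) := rfl
      rw [h1, h2]
      abel
  have := key n le_rfl
  have hfil : Finset.univ.filter (fun i : Fin n => (i : ℕ) < n) = Finset.univ := by
    ext i; simp [i.isLt]
  rw [hfil] at this
  simpa [Fin.last] using this

private lemma pm_card {n : ℕ} (c : Fin n → ℤ) (h1 : ∀ i, c i = 1 ∨ c i = -1)
    (h0 : ∑ i, c i = 0) : 2 * (Finset.univ.filter (fun i => c i = 1)).card = n := by
  classical
  have he : ∑ i, c i = ∑ i : Fin n, (if c i = 1 then (1 : ℤ) else -1) := by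
    refine Finset.sum_congr rfl fun i _ => ?_
    rcases h1 i with h | h <;> simp [h]
  rw [he, Finset.sum_ite, Finset.sum_const, Finset.sum_const] at h0
  have hcard := Finset.card_filter_add_card_filter_not
    (s := (Finset.univ : Finset (Fin n))) (p := fun i => c i = 1)
  simp only [Finset.card_univ, Fintype.card_fin] at hcard
  simp only [nsmul_eq_mul, mul_one, mul_neg_one, smul_eq_mul] at h0
  omega

lemma W_origin_le (n : ℕ) :
    W n (0, 0) ≤ if Even n then (n.choose (n / 2)) ^ 2 else 0 := by
  classical
  set S : Set (Fin (n + 1) → ℤ × ℤ) := {v | v 0 = (0, 0) ∧ v (Fin.last n) = (0, 0) ∧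
    ∀ i : Fin n, gnorm (v i.succ - v i.castSucc) = 1} with hSdef
  set enc : (Fin (n + 1) → ℤ × ℤ) → Finset (Fin n) × Finset (Fin n) := fun v =>
    (Finset.univ.filter (fun i =>
        (v i.succ - v i.castSucc).1 + (v i.succ - v i.castSucc).2 = 1),
     Finset.univ.filter (fun i =>
        (v i.succ - v i.castSucc).1 - (v i.succ - v i.castSucc).2 = 1)) with hencdef
  -- facts about walks in S
  have hfacts : ∀ v ∈ S, 2 * (enc v).1.card = n ∧ 2 * (enc v).2.card = n := by
    intro v hv
    obtain ⟨h0, hlast, hstep⟩ := hv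
    have hsum : ∑ i : Fin n, (v i.succ - v i.castSucc) = 0 := by
      rw [sum_steps v, hlast, h0]; simp
    have hsum1 : ∑ i : Fin n, (v i.succ - v i.castSucc).1 = 0 := by
      rw [← Prod.fst_sum, hsum]; rfl
    have hsum2 : ∑ i : Fin n, (v i.succ - v i.castSucc).2 = 0 := by
      rw [← Prod.snd_sum, hsum]; rfl
    have hpm : ∀ i : Fin n,
        ((v i.succ - v i.castSucc).1 + (v i.succ - v i.castSucc).2 = 1 ∨
         (v i.succ - v i.castSucc).1 + (v i.succ - v i.castSucc).2 = -1) ∧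
        ((v i.succ - v i.castSucc).1 - (v i.succ - v i.castSucc).2 = 1 ∨
         (v i.succ - v i.castSucc).1 - (v i.succ - v i.castSucc).2 = -1) := by
      intro i
      have := hstep i
      unfold gnorm at this
      omega
    constructor
    · exact pm_card _ (fun i => (hpm i).1)
        (by rw [Finset.sum_add_distrib, hsum1, hsum2]; ring)
    · exact pm_card _ (fun i => (hpm i).2)
        (by rw [Finset.sum_sub_distrib, hsum1, hsum2]; ring)
  have hinj : Set.InjOn enc S := by
    intro v hv w hw he
    have hs : ∀ i : Fin n, v i.succ - v i.castSucc = w i.succ - w i.castSucc := by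
      intro i
      have e1 : ((v i.succ - v i.castSucc).1 + (v i.succ - v i.castSucc).2 = 1) ↔
          ((w i.succ - w i.castSucc).1 + (w i.succ - w i.castSucc).2 = 1) := by
        have := congrArg Prod.fst he
        simp only [hencdef, Finset.ext_iff, Finset.mem_filter, Finset.mem_univ,
          true_and] at this
        exact this i
      have e2 : ((v i.succ - v i.castSucc).1 - (v i.succ - v i.castSucc).2 = 1) ↔
          ((w i.succ - w i.castSucc).1 - (w i.succ - w i.castSucc).2 = 1) := by
        have := congrArg Prod.snd he
        simp only [hencdef, Finset.ext_iff, Finset.mem_filter, Finset.mem_univ,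
          true_and] at this
        exact this i
      have g1 := hv.2.2 i
      have g2 := hw.2.2 i
      unfold gnorm at g1 g2
      have : (v i.succ - v i.castSucc).1 = (w i.succ - w i.castSucc).1 ∧
          (v i.succ - v i.castSucc).2 = (w i.succ - w i.castSucc).2 := by omega
      exact Prod.ext this.1 this.2
    funext j
    induction j using Fin.induction with
    | zero => rw [hv.1, hw.1]
    | succ i ih =>
      have := hs i
      have h1 : v i.succ = (v i.succ - v i.castSucc) + v i.castSucc := by abel
      rw [h1, this, ih]; abel
  by_cases hev : Even n
  · simp only [hev, if_true]
    have hsub : enc '' S ⊆ ↑((Finset.univ.powersetCard (n / 2)) ×ˢ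
        (Finset.univ.powersetCard (n / 2)) : Finset (Finset (Fin n) × Finset (Fin n))) := by
      rintro _ ⟨v, hv, rfl⟩
      obtain ⟨h1, h2⟩ := hfacts v hv
      simp only [hencdef] at h1 h2
      simp only [hencdef, Finset.coe_product, Set.mem_prod, Finset.mem_coe,
        Finset.mem_powersetCard]
      exact ⟨⟨Finset.subset_univ _, by omega⟩, ⟨Finset.subset_univ _, by omega⟩⟩
    have : W n (0, 0) = S.ncard := rfl
    rw [this, ← Set.ncard_image_of_injOn hinj]
    calc (enc '' S).ncard ≤ _ := Set.ncard_le_ncard hsub (Finset.finite_toSet _)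
      _ = ((Finset.univ.powersetCard (n / 2)) ×ˢ (Finset.univ.powersetCard (n / 2)) :
            Finset (Finset (Fin n) × Finset (Fin n))).card := Set.ncard_coe_finset _
      _ = (n.choose (n / 2)) ^ 2 := by
          rw [Finset.card_product, Finset.card_powersetCard]
          simp [sq]
  · simp only [hev, if_false]
    have : S = ∅ := by
      by_contra h
      obtain ⟨v, hv⟩ := Set.nonempty_iff_ne_empty.2 h
      have := (hfacts v hv).1
      exact hev ⟨(enc v).1.card, by omega⟩
    have : W n (0, 0) = S.ncard := rfl
    rw [this]; simp [‹S = ∅›]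


private lemma wallis_id (m : ℕ) :
    (2 * (m : ℝ) + 1) * ((Nat.centralBinom m : ℝ) / 4 ^ m) ^ 2 * Real.Wallis.W m = 1 := by
  induction m with
  | zero => simp [Real.Wallis.W, Nat.centralBinom]
  | succ m ih =>
    have hrec : ((m : ℝ) + 1) * (Nat.centralBinom (m + 1) : ℝ)
        = 2 * (2 * m + 1) * (Nat.centralBinom m : ℝ) := by
      exact_mod_cast Nat.succ_mul_centralBinom_succ m
    have hm1 : ((m : ℝ) + 1) ≠ 0 := by positivity
    have hcb : (Nat.centralBinom (m + 1) : ℝ)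
        = 2 * (2 * m + 1) * (Nat.centralBinom m : ℝ) / ((m : ℝ) + 1) := by
      rw [eq_div_iff hm1]; linarith [hrec]
    rw [Real.Wallis.W_succ, hcb]
    push_cast
    have h1 : (2 * (m : ℝ) + 1) ≠ 0 := by positivity
    have h3 : (2 * (m : ℝ) + 3) ≠ 0 := by positivity
    have h4 : (4 : ℝ) ^ m ≠ 0 := by positivity
    have key : (2 * ((m : ℝ) + 1) + 1) *
        ((2 * (2 * (m : ℝ) + 1) * (Nat.centralBinom m : ℝ) / ((m : ℝ) + 1)) / 4 ^ (m + 1)) ^ 2 *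
        (Real.Wallis.W m * ((2 * (m : ℝ) + 2) / (2 * m + 1) * ((2 * m + 2) / (2 * m + 3))))
        = (2 * (m : ℝ) + 1) * ((Nat.centralBinom m : ℝ) / 4 ^ m) ^ 2 * Real.Wallis.W m := by
      field_simp
      ring
    rw [key, ih]

private lemma cb_sq_le (m : ℕ) (hm : 1 ≤ m) :
    ((Nat.centralBinom m : ℝ) / 4 ^ m) ^ 2 ≤ 1 / (π * m) := by
  have hid := wallis_id m
  have hW := Real.Wallis.le_W m
  have hWpos := Real.Wallis.W_pos m
  have ha : (0 : ℝ) ≤ ((Nat.centralBinom m : ℝ) / 4 ^ m) ^ 2 := sq_nonneg _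
  have hm' : (1 : ℝ) ≤ (m : ℝ) := by exact_mod_cast hm
  have hπ := Real.pi_pos
  rw [le_div_iff₀ (by positivity : (0:ℝ) < π * m)]
  -- goal: a * (π * m) ≤ 1 = (2m+1) * a * W m
  rw [← hid]
  have hkey : π * (m : ℝ) ≤ (2 * m + 1) * Real.Wallis.W m := by
    have h2 : (2 * (m : ℝ) + 1) / (2 * m + 2) * (π / 2) ≤ Real.Wallis.W m := hW
    have h5 : (0 : ℝ) < 2 * m + 2 := by positivity
    rw [div_mul_eq_mul_div, div_le_iff₀ h5] at h2
    nlinarith [h2, mul_le_mul_of_nonneg_left h2 (le_of_lt hWpos)]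
  nlinarith [mul_le_mul_of_nonneg_left hkey ha]


/-- The Green's function `G^{o,x}` of the simple random walk on `ℤ²` with
killing rate `κ`: `G κ x = Σ_{n≥0} (4+κ)^{-n} W_n^{o,x}`. -/
noncomputable def G (κ : ℝ) (x : ℤ × ℤ) : ℝ :=
  ∑' n : ℕ, (1 / (4 + κ)) ^ n * (W n x : ℝ)

/-- Lemma 3.4, eq. (3.12): `G^{o,o} ≤ (log κ⁻¹)/π + 2` for `0 < κ < 1`. -/
theorem stmt8 (κ : ℝ) (hκ : 0 < κ) (hκ' : κ < 1) :
    G κ (0, 0) ≤ Real.log κ⁻¹ / π + 2 := by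
  have h4κ : (0 : ℝ) < 4 + κ := by linarith
  set y : ℝ := (4 / (4 + κ)) ^ 2 with hy_def
  have hy0 : 0 < y := by positivity
  have hy1 : y < 1 := by
    rw [hy_def, div_pow, div_lt_one (by positivity)]
    nlinarith
  set L : ℝ := -Real.log (1 - y) with hL_def
  have hπ := Real.pi_pos
  -- the bounding series
  set g : ℕ → ℝ := fun m => if m = 0 then 1 else y ^ m / ((m : ℝ) * π) with hg_def
  have hsum1 : HasSum (fun m : ℕ => y ^ (m + 1) / ((m : ℝ) + 1)) L :=
    Real.hasSum_pow_div_log_of_abs_lt_one (abs_lt.2 ⟨by linarith, hy1⟩)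
  have hsum2 : HasSum (fun m : ℕ => g (m + 1)) (L / π) := by
    have := hsum1.div_const π
    convert this using 2 with m
    · rfl
    simp only [hg_def, Nat.succ_ne_zero, if_false]
    push_cast
    rw [div_div]
  have hsum3 : HasSum g (L / π + 1) := by
    have h := (hasSum_nat_add_iff (f := g) 1).mp hsum2
    have h1 : ∑ i ∈ Finset.range 1, g i = 1 := by simp [hg_def]
    rw [h1] at h
    exact h
  set F : ℕ → ℝ := fun n => if Even n then g (n / 2) else 0 with hF_def
  have hFsum : HasSum F (L / π + 1) := by
    have hinj : Function.Injective (fun m : ℕ => 2 * m) := fun a b h => by dsimp at h; omega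
    have h0 : ∀ x ∉ Set.range (fun m : ℕ => 2 * m), F x = 0 := by
      intro x hx
      have hx' : ¬ Even x := by
        intro hev
        obtain ⟨k, hk⟩ := hev
        exact hx ⟨k, show 2 * k = x by omega⟩
      simp only [hF_def]
      rw [if_neg hx']
    have hcomp : (F ∘ fun m : ℕ => 2 * m) = g := by
      funext m
      simp only [hF_def, Function.comp_apply]
      rw [if_pos ⟨m, two_mul m⟩]
      congr 1
      show 2 * m / 2 = m
      omega
    exact (hinj.hasSum_iff h0).mp (hcomp ▸ hsum3)
  -- pointwise comparison
  have hfle : ∀ n : ℕ, (1 / (4 + κ)) ^ n * (W n (0, 0) : ℝ) ≤ F n := by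
    intro n
    have hWle := W_origin_le n
    by_cases hev : Even n
    · obtain ⟨m, hm⟩ := hev
      have hn2 : n = 2 * m := by omega
      have hWle' : (W n (0, 0) : ℝ) ≤ ((Nat.centralBinom m : ℝ)) ^ 2 := by
        rw [if_pos ⟨m, hm⟩] at hWle
        have : n.choose (n / 2) = Nat.centralBinom m := by
          rw [hn2, Nat.centralBinom]
          congr 1
          omega
        rw [this] at hWle
        exact_mod_cast hWle
      have hxpow : (1 / (4 + κ)) ^ n * ((Nat.centralBinom m : ℝ)) ^ 2
          = ((Nat.centralBinom m : ℝ) / 4 ^ m) ^ 2 * y ^ m := by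
        have e1 : y ^ m = ((4 : ℝ) ^ m) ^ 2 / (((4 : ℝ) + κ) ^ m) ^ 2 := by
          rw [hy_def, ← pow_mul, mul_comm 2 m, pow_mul, div_pow, div_pow]
        have e2 : (1 / (4 + κ)) ^ n = 1 / (((4 : ℝ) + κ) ^ m) ^ 2 := by
          rw [hn2, mul_comm 2 m, pow_mul, div_pow, one_pow, div_pow, one_pow]
        rw [e1, e2, div_pow]
        have h1 : (((4 : ℝ) + κ) ^ m) ^ 2 ≠ 0 := by positivity
        have h2 : (((4 : ℝ)) ^ m) ^ 2 ≠ 0 := by positivity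
        field_simp
      have hF : F n = g m := by
        simp only [hF_def]
        rw [if_pos ⟨m, hm⟩]
        congr 1
        omega
      rw [hF]
      calc (1 / (4 + κ)) ^ n * (W n (0, 0) : ℝ)
          ≤ (1 / (4 + κ)) ^ n * ((Nat.centralBinom m : ℝ)) ^ 2 := by
            apply mul_le_mul_of_nonneg_left hWle' (by positivity)
        _ = ((Nat.centralBinom m : ℝ) / 4 ^ m) ^ 2 * y ^ m := hxpow
        _ ≤ g m := by
            rcases Nat.eq_zero_or_pos m with hm0 | hm0
            · subst hm0
              simp [hg_def, Nat.centralBinom]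
            · rw [hg_def]
              simp only [Nat.pos_iff_ne_zero.mp hm0, if_neg (Nat.pos_iff_ne_zero.mp hm0)]
              calc ((Nat.centralBinom m : ℝ) / 4 ^ m) ^ 2 * y ^ m
                  ≤ 1 / (π * m) * y ^ m := by
                    apply mul_le_mul_of_nonneg_right (cb_sq_le m hm0) (by positivity)
                _ = y ^ m / ((m : ℝ) * π) := by rw [mul_comm (π) ((m:ℝ))]; ring
    · rw [if_neg hev] at hWle
      have : W n (0, 0) = 0 := Nat.le_zero.mp hWle
      rw [this]
      simp only [hF_def, if_neg hev]
      simp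
  have hf_nonneg : ∀ n : ℕ, 0 ≤ (1 / (4 + κ)) ^ n * (W n (0, 0) : ℝ) := by
    intro n; positivity
  have hfsummable : Summable (fun n : ℕ => (1 / (4 + κ)) ^ n * (W n (0, 0) : ℝ)) :=
    Summable.of_nonneg_of_le hf_nonneg hfle hFsum.summable
  have hGle : G κ (0, 0) ≤ L / π + 1 := by
    rw [G, ← hFsum.tsum_eq]
    exact Summable.tsum_le_tsum hfle hfsummable hFsum.summable
  refine hGle.trans ?_
  -- final log estimate
  have h8κ : (0 : ℝ) < 8 + κ := by linarith
  have h1y : 1 - y = κ * (8 + κ) / (4 + κ) ^ 2 := by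
    rw [hy_def]
    field_simp
    ring
  have hLeq : L = Real.log κ⁻¹ + Real.log ((4 + κ) ^ 2 / (8 + κ)) := by
    have e1 : Real.log ((4 + κ) ^ 2 / (8 + κ))
        = Real.log ((4 + κ) ^ 2) - Real.log (8 + κ) :=
      Real.log_div (by positivity) (by positivity)
    have e2 : Real.log (κ * (8 + κ) / (4 + κ) ^ 2)
        = Real.log κ + Real.log (8 + κ) - Real.log ((4 + κ) ^ 2) := by
      rw [Real.log_div (by positivity) (by positivity),
        Real.log_mul (ne_of_gt hκ) (by positivity)]
    rw [hL_def, h1y, e2, e1, Real.log_inv]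
    ring
  have hlog2 : Real.log ((4 + κ) ^ 2 / (8 + κ)) ≤ π := by
    have hpos : (0 : ℝ) < (4 + κ) ^ 2 / (8 + κ) := by positivity
    have h1 : Real.log ((4 + κ) ^ 2 / (8 + κ)) ≤ (4 + κ) ^ 2 / (8 + κ) - 1 :=
      Real.log_le_sub_one_of_pos hpos
    have h2 : (4 + κ) ^ 2 / (8 + κ) ≤ 4 := by
      rw [div_le_iff₀ h8κ]
      nlinarith
    have h3 := Real.pi_gt_three
    linarith
  have : L ≤ Real.log κ⁻¹ + π := by rw [hLeq]; linarith
  have hdiv : L / π ≤ (Real.log κ⁻¹ + π) / π := by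
    gcongr
  rw [add_div, div_self (ne_of_gt hπ)] at hdiv
  linarith
end

section
/- There exists M such that for every x ∈ ℤ² with |x| ≥ M and every killing rate κ > 0, Σ_{n=|x|}^{⌊|x|²/(2 log |x|)⌋} (4+κ)^{−n} W_n^{o,x} ≤ 3/|x|. -/
open scoped Real

/-- Key inequality: `1 - t ≤ (1+t) e^{-2t}` for `t ≥ 0`. -/
lemma key_exp {t : ℝ} (ht : 0 ≤ t) : 1 - t ≤ (1 + t) * Real.exp (-(2*t)) := by
  set g : ℝ → ℝ := fun s => (1 + s) * Real.exp (-(2*s)) - (1 - s) with hg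
  have hderiv : ∀ s : ℝ, HasDerivAt g (1 - (1 + 2*s) * Real.exp (-(2*s))) s := by
    intro s
    have h1 : HasDerivAt (fun s : ℝ => 1 + s) 1 s := by
      simpa using (hasDerivAt_id s).const_add (1:ℝ)
    have h2 : HasDerivAt (fun s : ℝ => Real.exp (-(2*s))) (Real.exp (-(2*s)) * (-2)) s := by
      have : HasDerivAt (fun s : ℝ => -(2*s)) (-2) s := by
        simpa [Pi.neg_def] using ((hasDerivAt_id s).const_mul (2:ℝ)).neg
      exact (Real.hasDerivAt_exp _).comp s this
    have h3 : HasDerivAt (fun s : ℝ => 1 - s) (-1) s := by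
      exact (hasDerivAt_id' s).const_sub (1:ℝ)
    have := (h1.mul h2).sub h3
    exact this.congr_deriv (by ring)
  have hmono : MonotoneOn g (Set.Ici (0:ℝ)) := by
    apply monotoneOn_of_deriv_nonneg (convex_Ici 0)
    · exact (Continuous.continuousOn (by fun_prop))
    · intro s hs
      exact (hderiv s).differentiableAt.differentiableWithinAt
    · intro s hs
      rw [(hderiv s).deriv]
      have hs0 : (0:ℝ) ≤ s := le_of_lt (by simpa using hs)
      have : (1 + 2*s) ≤ Real.exp (2*s) := by
        have := Real.add_one_le_exp (2*s); linarith
      have hpos : (0:ℝ) < Real.exp (-(2*s)) := Real.exp_pos _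
      have : (1 + 2*s) * Real.exp (-(2*s)) ≤ Real.exp (2*s) * Real.exp (-(2*s)) := by
        apply mul_le_mul_of_nonneg_right this (le_of_lt hpos)
      rw [← Real.exp_add] at this
      simp at this
      linarith
  have h0 : g 0 ≤ g t := hmono (by simp) (by simpa using ht) ht
  simp [hg] at h0 ⊢
  linarith

/-- `y/x ≤ exp(-2(x-y)/(x+y))` for `0 < y ≤ x`. -/
lemma ratio_le_exp {x y : ℝ} (hy : 0 < y) (hxy : y ≤ x) :
    y / x ≤ Real.exp (-(2*(x - y)/(x + y))) := by
  have hx : 0 < x := lt_of_lt_of_le hy hxy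
  have hxy0 : 0 < x + y := by linarith
  set t : ℝ := (x - y)/(x + y) with hts
  have ht0 : 0 ≤ t := div_nonneg (by linarith) (le_of_lt hxy0)
  have h1t : 1 - t = 2*y/(x+y) := by rw [hts, eq_div_iff hxy0.ne', sub_mul, div_mul_cancel₀ _ hxy0.ne']; ring
  have h1t' : 1 + t = 2*x/(x+y) := by rw [hts, eq_div_iff hxy0.ne', add_mul, div_mul_cancel₀ _ hxy0.ne']; ring
  have hkey := key_exp ht0
  rw [h1t, h1t'] at hkey
  have h2 : -(2*t) = -(2*(x-y)/(x+y)) := by rw [hts]; ring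
  rw [h2] at hkey
  rw [div_le_iff₀ hx]
  have := mul_le_mul_of_nonneg_left hkey (le_of_lt (half_pos hxy0))
  calc y = (x+y)/2 * (2*y/(x+y)) := by field_simp
    _ ≤ (x+y)/2 * (2*x/(x+y) * Real.exp (-(2*(x-y)/(x+y)))) := this
    _ = Real.exp (-(2*(x-y)/(x+y))) * x := by field_simp

/-- Monotonicity: `e^{-c/x}/x ≤ e^{-c/y}/y` for `0 < x ≤ y ≤ c`. -/
lemma exp_div_mono {c x y : ℝ} (hx : 0 < x) (hxy : x ≤ y) (hyc : y ≤ c) :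
    Real.exp (-(c/x)) / x ≤ Real.exp (-(c/y)) / y := by
  have hy : 0 < y := lt_of_lt_of_le hx hxy
  have hlog : Real.log (y/x) ≤ y/x - 1 := Real.log_le_sub_one_of_pos (div_pos hy hx)
  have h2 : y/x - 1 ≤ c/x - c/y := by
    rw [div_sub_div _ _ (ne_of_gt hx) (ne_of_gt hy)]
    rw [div_sub_one (ne_of_gt hx)]
    rw [div_le_div_iff₀ hx (by positivity)]
    have : (y - x) * y ≤ (y-x) * c := mul_le_mul_of_nonneg_left (le_trans hyc (le_refl c)) (by linarith)
    nlinarith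
  have h3 : y/x ≤ Real.exp (c/x - c/y) := by
    calc y/x = Real.exp (Real.log (y/x)) := (Real.exp_log (div_pos hy hx)).symm
      _ ≤ Real.exp (c/x - c/y) := Real.exp_le_exp.mpr (le_trans hlog h2)
  rw [div_le_div_iff₀ hx hy]
  calc Real.exp (-(c/x)) * y = Real.exp (-(c/x)) * x * (y/x) := by field_simp
    _ ≤ Real.exp (-(c/x)) * x * Real.exp (c/x - c/y) := by
        apply mul_le_mul_of_nonneg_left h3 (by positivity)
    _ = Real.exp (-(c/y)) * x := by rw [mul_comm (Real.exp _) x, mul_assoc, ← Real.exp_add]; ring_nf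

lemma central_sq (m : ℕ) : (Nat.centralBinom m)^2 * (3*m+1) ≤ 16^m := by
  induction m with
  | zero => simp [Nat.centralBinom]
  | succ m ih =>
    have key := Nat.succ_mul_centralBinom_succ m
    have hpos : 0 < (m+1)^2 * (3*m+1) := by positivity
    apply Nat.le_of_mul_le_mul_left _ hpos
    have e1 : (m+1)^2 * (3*m+1) * ((Nat.centralBinom (m+1))^2 * (3*(m+1)+1))
        = ((m+1) * Nat.centralBinom (m+1))^2 * ((3*m+1)*(3*m+4)) := by ring
    rw [e1, key]
    have e2 : (2 * (2*m+1) * Nat.centralBinom m)^2 * ((3*m+1)*(3*m+4))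
        = (4*(2*m+1)^2*(3*m+4)) * ((Nat.centralBinom m)^2 * (3*m+1)) := by ring
    rw [e2]
    calc (4*(2*m+1)^2*(3*m+4)) * ((Nat.centralBinom m)^2 * (3*m+1))
        ≤ (4*(2*m+1)^2*(3*m+4)) * 16^m := Nat.mul_le_mul_left _ ih
      _ ≤ ((m+1)^2*(3*m+1)*16) * 16^m := by
          apply Nat.mul_le_mul_right
          nlinarith
      _ = (m+1)^2 * (3*m+1) * 16^(m+1) := by ring

lemma central_sq_le (n : ℕ) : ((n.choose ((n+1)/2) : ℝ))^2 * (3*n) ≤ 2 * 4^n := by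
  rcases Nat.even_or_odd n with ⟨m, hm⟩ | ⟨m, hm⟩
  · have hn : n = 2*m := by omega
    subst hn
    have hc : (2*m).choose ((2*m+1)/2) = Nat.centralBinom m := by
      rw [show (2*m+1)/2 = m by omega]; rfl
    rw [hc]
    have hr : ((Nat.centralBinom m : ℝ))^2 * (3*m+1) ≤ 16^m := by
      exact_mod_cast central_sq m
    have h16 : (16:ℝ)^m = 4^(2*m) := by rw [show (16:ℝ) = 4^2 by norm_num, ← pow_mul]
    push_cast
    nlinarith [sq_nonneg ((Nat.centralBinom m : ℝ)), pow_pos (show (0:ℝ) < 16 by norm_num) m]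
  · subst hm
    have hc : (2*m+1).choose ((2*m+1+1)/2) = (2*m+1).choose (m+1) := by
      congr 1; omega
    rw [hc]
    have key : (2*m+1) * (2*m).choose m = (2*m+1).choose (m+1) * (m+1) := by
      simpa using Nat.add_one_mul_choose_eq (2*m) m
    have keyr : ((2*m+1):ℝ) * (Nat.centralBinom m) = ((2*m+1).choose (m+1) : ℝ) * (m+1) := by
      exact_mod_cast key
    have hr : ((Nat.centralBinom m : ℝ))^2 * (3*m+1) ≤ 16^m := by
      exact_mod_cast central_sq m
    have h4 : (4:ℝ)^(2*m+1) = 4 * 16^m := by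
      rw [pow_succ, show (16:ℝ) = 4^2 by norm_num, ← pow_mul]; ring
    push_cast
    rw [h4]
    -- goal: choose^2 * (3*(2m+1)) ≤ 2*(4*16^m)
    -- (m+1)^2 * LHS = (2m+1)^2 cB^2 * (6m+3) ≤ (2m+1)^3 * 3 * cB^2
    have hme : ((2*m+1).choose (m+1) : ℝ) = (2*m+1) * (Nat.centralBinom m) / (m+1) := by
      field_simp
      linarith [keyr]
    rw [hme]
    rw [div_pow]
    rw [div_mul_eq_mul_div, div_le_iff₀ (by positivity)]
    have hcb : (0:ℝ) ≤ (Nat.centralBinom m : ℝ) := Nat.cast_nonneg _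
    nlinarith [hr, sq_nonneg ((Nat.centralBinom m : ℝ)), pow_pos (show (0:ℝ) < 16 by norm_num) m,
      mul_le_mul_of_nonneg_left hr (show (0:ℝ) ≤ 3*(2*m+1)^3 by positivity)]


lemma choose_telescope (n : ℕ) :
    ∀ j : ℕ, (n+1)/2 + j ≤ n →
    (n.choose ((n+1)/2 + j) : ℝ) ≤
      n.choose ((n+1)/2) * Real.exp (-(2*j*(j + (n % 2 : ℕ)) / (n+1))) := by
  set m0 := (n+1)/2 with hm0
  set e := n % 2 with he
  have h2m0 : 2 * m0 = n + e := by omega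
  intro j
  induction j with
  | zero => intro _; simp
  | succ j ih =>
    intro hj
    have hj' : m0 + j ≤ n := by omega
    have ihj := ih (by omega)
    -- choose identity
    have key : n.choose (m0 + j + 1) * (m0 + j + 1) = n.choose (m0 + j) * (n - (m0 + j)) :=
      Nat.choose_succ_right_eq n (m0 + j)
    have hy1 : 1 ≤ n - (m0 + j) := by omega
    have keyr : (n.choose (m0 + j + 1) : ℝ) * (m0 + j + 1) = n.choose (m0 + j) * ((n:ℝ) - (m0 + j)) := by
      have := congrArg (fun t : ℕ => (t : ℝ)) key
      push_cast at this
      rw [this]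
      congr 1
      have : ((n - (m0 + j) : ℕ) : ℝ) = (n:ℝ) - (m0+j) := by
        push_cast [Nat.cast_sub hj']; ring
      rw [this]
    set x : ℝ := (m0 : ℝ) + j + 1 with hx
    set y : ℝ := (n : ℝ) - (m0 + j) with hyd
    have hxpos : (0:ℝ) < x := by positivity
    have hy : (0:ℝ) < y := by
      have : (m0 + j : ℕ) < n := by omega
      have := (Nat.cast_lt (α := ℝ)).mpr this
      push_cast at this ⊢
      simp [hyd]
      push_cast
      linarith
    have hyx : y ≤ x := by
      have : n ≤ 2*m0 + 2*j + 1 := by omega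
      have := (Nat.cast_le (α := ℝ)).mpr this
      push_cast at this
      simp [hyd, hx]
      have h2m0r : 2*(m0:ℝ) = n + e := by exact_mod_cast h2m0
      linarith
    have hxy : x + y = (n:ℝ) + 1 := by simp [hx, hyd]; ring
    have hxmy : x - y = 2*j + e + 1 := by
      have h2m0r : 2*(m0:ℝ) = (n:ℝ) + e := by exact_mod_cast h2m0
      simp [hx, hyd]; linarith
    have hratio : y / x ≤ Real.exp (-(2*(2*j + (e:ℝ) + 1)/((n:ℝ)+1))) := by
      have := ratio_le_exp hy hyx
      rwa [hxy, hxmy] at this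
    have hcr : (n.choose (m0 + j + 1) : ℝ) = n.choose (m0 + j) * (y / x) := by
      field_simp [ne_of_gt hxpos] at keyr ⊢
      rw [mul_comm] at keyr
      linarith [keyr]
    rw [show m0 + (j+1) = m0 + j + 1 by ring, hcr]
    push_cast
    calc (n.choose (m0 + j) : ℝ) * (y/x)
        ≤ (n.choose m0 * Real.exp (-(2*j*(j + (e:ℝ)) / (n+1)))) * Real.exp (-(2*(2*j + (e:ℝ) + 1)/((n:ℝ)+1))) := by
          apply mul_le_mul ihj hratio (by positivity) (by positivity)
      _ = n.choose m0 * Real.exp (-(2*(j+1)*((j+1) + (e:ℝ)) / (n+1))) := by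
          rw [mul_assoc, ← Real.exp_add]
          congr 2
          field_simp
          ring


lemma choose_le_exp_aux (n : ℕ) (hn : 1 ≤ n) (m : ℕ) (h1 : (n+1)/2 ≤ m) (h2 : m ≤ n) :
    (n.choose m : ℝ) ≤ n.choose ((n+1)/2) * Real.exp (1/2 - ((2*m:ℝ) - n)^2 / (2*n)) := by
  set m0 := (n+1)/2 with hm0
  set e := n % 2 with he
  have h2m0 : 2 * m0 = n + e := by omega
  obtain ⟨j, rfl⟩ : ∃ j, m = m0 + j := ⟨m - m0, by omega⟩
  have htel := choose_telescope n j (by omega)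
  refine le_trans htel ?_
  apply mul_le_mul_of_nonneg_left _ (Nat.cast_nonneg _)
  apply Real.exp_le_exp.mpr
  have hjr : (2*((m0:ℝ)+j) - n) = 2*j + e := by
    have : 2*(m0:ℝ) = n + e := by exact_mod_cast h2m0
    push_cast; linarith
  push_cast
  rw [hjr]
  have hE : ((e:ℝ)) = 0 ∨ ((e:ℝ)) = 1 := by
    have : e = 0 ∨ e = 1 := by omega
    rcases this with h | h <;> [left; right] <;> rw [h] <;> norm_num
  have hle : 2*(j:ℝ) + (e:ℝ) ≤ (n:ℝ) := by
    have : 2*j + e ≤ n := by omega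
    exact_mod_cast this
  have hJ0 : (0:ℝ) ≤ (j:ℝ) := Nat.cast_nonneg _
  have hN1 : (1:ℝ) ≤ (n:ℝ) := by exact_mod_cast hn
  have heq : (2*(j:ℝ)+(e:ℝ))^2/(2*(n:ℝ)) - 2*(j:ℝ)*((j:ℝ)+(e:ℝ))/((n:ℝ)+1)
      = ((2*(j:ℝ)+(e:ℝ))^2*((n:ℝ)+1) - 2*(n:ℝ)*(2*(j:ℝ)*((j:ℝ)+(e:ℝ)))) / (2*(n:ℝ)*((n:ℝ)+1)) := by
    field_simp
    try ring
  have hpoly : (2*(j:ℝ)+(e:ℝ))^2*((n:ℝ)+1) - 2*(n:ℝ)*(2*(j:ℝ)*((j:ℝ)+(e:ℝ))) ≤ 1/2 * (2*(n:ℝ)*((n:ℝ)+1)) := by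
    rcases hE with h | h <;> rw [h] at hle ⊢ <;> nlinarith [sq_nonneg (2*(j:ℝ) - (n:ℝ)), sq_nonneg ((j:ℝ))]
  have hfin : (2*(j:ℝ)+(e:ℝ))^2/(2*(n:ℝ)) - 2*(j:ℝ)*((j:ℝ)+(e:ℝ))/((n:ℝ)+1) ≤ 1/2 := by
    rw [heq, div_le_iff₀ (by positivity)]
    linarith
  linarith

lemma choose_le_exp (n : ℕ) (hn : 1 ≤ n) (m : ℕ) :
    (n.choose m : ℝ) ≤ n.choose ((n+1)/2) * Real.exp (1/2 - ((2*(m:ℝ)) - n)^2 / (2*n)) := by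
  rcases le_or_gt m n with hmn | hmn
  · rcases le_or_gt ((n+1)/2) m with h1 | h1
    · exact choose_le_exp_aux n hn m h1 hmn
    · have hsymm : n.choose m = n.choose (n - m) := (Nat.choose_symm hmn).symm
      rw [hsymm]
      have h1' : (n+1)/2 ≤ n - m := by omega
      have h2' : n - m ≤ n := by omega
      have := choose_le_exp_aux n hn (n - m) h1' h2'
      refine le_trans this ?_
      apply mul_le_mul_of_nonneg_left _ (Nat.cast_nonneg _)
      apply Real.exp_le_exp.mpr
      have hcast : ((n - m : ℕ) : ℝ) = (n:ℝ) - m := by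
        exact_mod_cast Nat.cast_sub (R := ℝ) hmn
      rw [hcast]
      have : (2*((n:ℝ) - m) - n)^2 = (2*(m:ℝ) - n)^2 := by ring
      rw [this]
  · have h0 : n.choose m = 0 := Nat.choose_eq_zero_of_lt hmn
    rw [h0]
    push_cast
    positivity




/-- pm sequences with a given sum -/
def S (n : ℕ) (a : ℤ) : Set (Fin n → ℤ) :=
  {ε | (∀ i, ε i = 1 ∨ ε i = -1) ∧ ∑ i, ε i = a}

lemma S_finite (n : ℕ) (a : ℤ) : (S n a).Finite := by
  have hfin : (Set.pi Set.univ (fun _ : Fin n => ({1,-1} : Set ℤ))).Finite :=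
    Set.Finite.pi (fun _ => Set.toFinite _)
  apply Set.Finite.subset hfin
  intro ε hε i _
  rcases hε.1 i with h | h <;> simp [h]

lemma prod_ncard {α β : Type*} {s : Set α} {t : Set β} (hs : s.Finite) (ht : t.Finite) :
    (s ×ˢ t).ncard = s.ncard * t.ncard := by
  rw [Set.ncard_eq_toFinset_card _ hs, Set.ncard_eq_toFinset_card _ ht,
    Set.ncard_eq_toFinset_card _ (hs.prod ht), ← Set.Finite.toFinset_prod hs ht,
    Finset.card_product]

lemma sum_pm {n : ℕ} {ε : Fin n → ℤ} (h : ∀ i, ε i = 1 ∨ ε i = -1) :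
    ∑ i, ε i = 2 * (Finset.univ.filter (fun i => ε i = 1)).card - n := by
  classical
  rw [← Finset.sum_filter_add_sum_filter_not Finset.univ (fun i => ε i = 1)]
  have h1 : ∑ i ∈ Finset.univ.filter (fun i => ε i = 1), ε i
      = ((Finset.univ.filter (fun i => ε i = 1)).card : ℤ) := by
    rw [Finset.sum_congr rfl (fun i hi => (Finset.mem_filter.mp hi).2)]
    simp
  have h2 : ∑ i ∈ Finset.univ.filter (fun i => ¬ ε i = 1), ε i
      = -((Finset.univ.filter (fun i => ¬ ε i = 1)).card : ℤ) := by
    rw [Finset.sum_congr rfl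
      (fun i hi => (h i).resolve_left (Finset.mem_filter.mp hi).2)]
    simp
  rw [h1, h2]
  have h3 : (Finset.univ.filter (fun i => ε i = 1)).card
      + (Finset.univ.filter (fun i => ¬ ε i = 1)).card = n := by
    rw [Finset.card_filter_add_card_filter_not]
    simp
  have h4 := congrArg (fun t : ℕ => (t : ℤ)) h3
  push_cast at h4
  linarith

lemma S_card_le (n : ℕ) (a : ℤ) {m : ℕ} (hm : 2 * (m:ℤ) = n + a) :
    (S n a).ncard ≤ n.choose m := by
  classical
  have hmaps : ∀ ε ∈ S n a,
      (Finset.univ.filter (fun i => ε i = 1)) ∈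
        (Finset.powersetCard m (Finset.univ : Finset (Fin n)) : Finset (Finset (Fin n))) := by
    intro ε hε
    rw [Finset.mem_powersetCard_univ]
    have := sum_pm hε.1
    rw [hε.2] at this
    have : 2 * ((Finset.univ.filter (fun i => ε i = 1)).card : ℤ) = n + a := by linarith
    omega
  have hinj : Set.InjOn (fun ε : Fin n → ℤ => Finset.univ.filter (fun i => ε i = 1)) (S n a) := by
    intro ε hε δ hδ heq
    simp only at heq
    funext i
    by_cases h1 : ε i = 1
    · have : i ∈ Finset.univ.filter (fun i => δ i = 1) := by
        rw [← heq]; simp [h1]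
      rw [h1, (Finset.mem_filter.mp this).2]
    · have hε2 : ε i = -1 := (hε.1 i).resolve_left h1
      have : i ∉ Finset.univ.filter (fun i => δ i = 1) := by
        rw [← heq]; simp [h1]
      have hδ1 : ¬ δ i = 1 := by
        intro hc; exact this (by simp [hc])
      rw [hε2, (hδ.1 i).resolve_left hδ1]
  have := Set.ncard_le_ncard_of_injOn
    (t := ((Finset.powersetCard m (Finset.univ : Finset (Fin n)) : Finset (Finset (Fin n))) : Set (Finset (Fin n))))
    _ hmaps hinj (Finset.finite_toSet _)
  rwa [Set.ncard_coe_finset, Finset.card_powersetCard, Finset.card_univ, Fintype.card_fin] at this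

lemma step_cases (d : ℤ × ℤ) (h : gnorm d = 1) :
    (d.1 + d.2 = 1 ∨ d.1 + d.2 = -1) ∧ (d.1 - d.2 = 1 ∨ d.1 - d.2 = -1) := by
  unfold gnorm at h
  omega

lemma telescope {n : ℕ} (v : Fin (n+1) → ℤ) :
    ∑ i : Fin n, (v i.succ - v i.castSucc) = v (Fin.last n) - v 0 := by
  set g : ℕ → ℤ := fun k => v ⟨min k n, Nat.lt_succ_of_le (min_le_right _ _)⟩ with hg
  calc ∑ i : Fin n, (v i.succ - v i.castSucc)
      = ∑ i : Fin n, (fun k : ℕ => g (k+1) - g k) i.val := by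
        apply Finset.sum_congr rfl
        intro i _
        simp only [hg]
        congr 2
        · apply Fin.ext; simp
        · apply Fin.ext; simp
    _ = ∑ k ∈ Finset.range n, (fun k : ℕ => g (k+1) - g k) k := Fin.sum_univ_eq_sum_range (fun k : ℕ => g (k+1) - g k) n
    _ = ∑ k ∈ Finset.range n, (g (k+1) - g k) := rfl
    _ = g n - g 0 := Finset.sum_range_sub g n
    _ = v (Fin.last n) - v 0 := by
        simp only [hg]
        congr 2 <;> apply Fin.ext <;> simp [Fin.last]
lemma W_le_prod (n : ℕ) (x : ℤ × ℤ) :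
    W n x ≤ (S n (x.1 + x.2)).ncard * (S n (x.1 - x.2)).ncard := by
  classical
  rw [W, ← prod_ncard (S_finite n (x.1+x.2)) (S_finite n (x.1-x.2))]
  set Φ : (Fin (n+1) → ℤ × ℤ) → (Fin n → ℤ) × (Fin n → ℤ) :=
    fun v => (fun i => (v i.succ - v i.castSucc).1 + (v i.succ - v i.castSucc).2,
              fun i => (v i.succ - v i.castSucc).1 - (v i.succ - v i.castSucc).2) with hΦ
  refine Set.ncard_le_ncard_of_injOn Φ ?_ ?_ ((S_finite n (x.1+x.2)).prod (S_finite n (x.1-x.2)))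
  · -- maps to
    rintro v ⟨h0, hl, hs⟩
    have tele1 : ∑ i : Fin n, (v i.succ - v i.castSucc).1 = x.1 := by
      have := telescope (fun j => (v j).1)
      calc ∑ i : Fin n, (v i.succ - v i.castSucc).1
          = ∑ i : Fin n, ((v i.succ).1 - (v i.castSucc).1) := by
            apply Finset.sum_congr rfl; intro i _; simp
        _ = (v (Fin.last n)).1 - (v 0).1 := this
        _ = x.1 := by rw [h0, hl]; simp
    have tele2 : ∑ i : Fin n, (v i.succ - v i.castSucc).2 = x.2 := by
      have := telescope (fun j => (v j).2)
      calc ∑ i : Fin n, (v i.succ - v i.castSucc).2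
          = ∑ i : Fin n, ((v i.succ).2 - (v i.castSucc).2) := by
            apply Finset.sum_congr rfl; intro i _; simp
        _ = (v (Fin.last n)).2 - (v 0).2 := this
        _ = x.2 := by rw [h0, hl]; simp
    constructor
    · constructor
      · intro i
        exact (step_cases _ (hs i)).1
      · rw [Finset.sum_add_distrib, tele1, tele2]
    · constructor
      · intro i
        exact (step_cases _ (hs i)).2
      · rw [Finset.sum_sub_distrib, tele1, tele2]
  · -- injective
    rintro v ⟨hv0, -, -⟩ w ⟨hw0, -, -⟩ heq
    simp only [hΦ, Prod.mk.injEq] at heq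
    obtain ⟨h1, h2⟩ := heq
    have hstep : ∀ i : Fin n, v i.succ - v i.castSucc = w i.succ - w i.castSucc := by
      intro i
      have e1 := congrFun h1 i
      have e2 := congrFun h2 i
      apply Prod.ext <;> omega
    funext i
    induction i using Fin.induction with
    | zero => rw [hv0, hw0]
    | succ i ih =>
      have := hstep i
      have : v i.succ = w i.succ - w i.castSucc + v i.castSucc := by
        rw [← this]; ring
      rw [this, ih]
      ring




lemma S_bound (n : ℕ) (hn : 1 ≤ n) (a : ℤ) :
    ((S n a).ncard : ℝ) ≤ (n.choose ((n+1)/2) : ℝ) * Real.exp (1/2 - (a:ℝ)^2/(2*(n:ℝ))) := by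
  classical
  rcases Set.eq_empty_or_nonempty (S n a) with h | ⟨ε, hε⟩
  · rw [h]
    simp only [Set.ncard_empty, Nat.cast_zero]
    positivity
  · set p := (Finset.univ.filter (fun i => ε i = 1)).card with hp
    have hsum := sum_pm hε.1
    rw [hε.2] at hsum
    have hm : 2 * (p:ℤ) = n + a := by omega
    have hcard := S_card_le n a hm
    have hcle := choose_le_exp n hn p
    have ha : (a:ℝ) = 2*(p:ℝ) - n := by
      have : (a:ℤ) = 2*(p:ℤ) - n := by omega
      exact_mod_cast this
    have hsq : ((2*(p:ℝ)) - n)^2 = (a:ℝ)^2 := by rw [ha]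
    rw [hsq] at hcle
    calc ((S n a).ncard : ℝ) ≤ (n.choose p : ℝ) := by exact_mod_cast hcard
      _ ≤ _ := hcle

lemma W_bound (n : ℕ) (hn : 1 ≤ n) (x : ℤ × ℤ) :
    (W n x : ℝ) ≤ 2/3 * Real.exp 1 * 4^n / n * Real.exp (-(((gnorm x : ℝ))^2/(2*(n:ℝ)))) := by
  have h1 := S_bound n hn (x.1+x.2)
  have h2 := S_bound n hn (x.1-x.2)
  have hW : (W n x : ℝ) ≤ ((S n (x.1+x.2)).ncard : ℝ) * ((S n (x.1-x.2)).ncard : ℝ) := by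
    exact_mod_cast W_le_prod n x
  have hkZ : ((gnorm x : ℤ))^2 ≤ (x.1+x.2)^2 + (x.1-x.2)^2 := by
    have e1 : ((gnorm x : ℕ) : ℤ) = |x.1| + |x.2| := by
      simp [gnorm, Int.natCast_natAbs]
    rw [e1]
    nlinarith [sq_nonneg (|x.1| - |x.2|), sq_abs x.1, sq_abs x.2]
  have hkR : ((gnorm x : ℝ))^2 ≤ ((x.1+x.2 : ℤ) : ℝ)^2 + ((x.1-x.2 : ℤ) : ℝ)^2 := by
    exact_mod_cast hkZ
  have hnR : (0:ℝ) < (n:ℝ) := by exact_mod_cast hn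
  set C := (n.choose ((n+1)/2) : ℝ) with hC
  have hC0 : 0 ≤ C := Nat.cast_nonneg _
  have hCsq : C^2 ≤ 2/3 * 4^n / n := by
    have hcs := central_sq_le n
    rw [le_div_iff₀ hnR]
    nlinarith [hcs]
  calc (W n x : ℝ)
      ≤ ((S n (x.1+x.2)).ncard : ℝ) * ((S n (x.1-x.2)).ncard : ℝ) := hW
    _ ≤ (C * Real.exp (1/2 - ((x.1+x.2 : ℤ):ℝ)^2/(2*(n:ℝ))))
        * (C * Real.exp (1/2 - ((x.1-x.2 : ℤ):ℝ)^2/(2*(n:ℝ)))) := by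
        apply mul_le_mul h1 h2 (Nat.cast_nonneg _) (by positivity)
    _ = C^2 * Real.exp (1 - (((x.1+x.2 : ℤ):ℝ)^2 + ((x.1-x.2 : ℤ):ℝ)^2)/(2*(n:ℝ))) := by
        rw [show ((1:ℝ) - (((x.1+x.2 : ℤ):ℝ)^2 + ((x.1-x.2 : ℤ):ℝ)^2)/(2*(n:ℝ)))
          = (1/2 - ((x.1+x.2 : ℤ):ℝ)^2/(2*(n:ℝ))) + (1/2 - ((x.1-x.2 : ℤ):ℝ)^2/(2*(n:ℝ))) by ring]
        rw [Real.exp_add]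
        ring
    _ ≤ (2/3 * 4^n / n) * Real.exp (1 - ((gnorm x : ℝ))^2/(2*(n:ℝ))) := by
        apply mul_le_mul hCsq _ (by positivity) (by positivity)
        apply Real.exp_le_exp.mpr
        have hdiv : ((gnorm x : ℝ))^2/(2*(n:ℝ))
            ≤ (((x.1+x.2 : ℤ):ℝ)^2 + ((x.1-x.2 : ℤ):ℝ)^2)/(2*(n:ℝ)) := by gcongr
        linarith
    _ = 2/3 * Real.exp 1 * 4^n / n * Real.exp (-(((gnorm x : ℝ))^2/(2*(n:ℝ)))) := by
        rw [show (1:ℝ) - ((gnorm x : ℝ))^2/(2*(n:ℝ)) = 1 + (-(((gnorm x : ℝ))^2/(2*(n:ℝ)))) by ring]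
        rw [Real.exp_add]
        ring

/-- Lemma 3.6, eq. (3.15): contribution of walks shorter than `|x|²/(2 log |x|)`. -/
theorem stmt10 :
    ∃ M : ℕ, ∀ x : ℤ × ℤ, M ≤ gnorm x → ∀ κ : ℝ, 0 < κ →
      (∑ n ∈ Finset.Icc (gnorm x) ⌊(gnorm x : ℝ) ^ 2 / (2 * Real.log (gnorm x))⌋₊,
        (1 / (4 + κ)) ^ n * (W n x : ℝ))
      ≤ 3 / (gnorm x : ℝ) := by
  refine ⟨3, fun x hk κ hκ => ?_⟩
  set k := gnorm x with hkdef
  set N := ⌊(k : ℝ) ^ 2 / (2 * Real.log k)⌋₊ with hNdef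
  have hk3 : 3 ≤ k := hk
  have hkR : (3:ℝ) ≤ (k:ℝ) := by exact_mod_cast hk3
  have hkpos : (0:ℝ) < k := by linarith
  rcases lt_or_ge N k with hlt | hge
  · rw [Finset.Icc_eq_empty (by omega)]
    simp only [Finset.sum_empty]
    positivity
  · have hlog1 : 1 ≤ Real.log k := by
      rw [Real.le_log_iff_exp_le hkpos]
      calc Real.exp 1 ≤ 2.7182818286 := le_of_lt Real.exp_one_lt_d9
        _ ≤ (k:ℝ) := by linarith
    have hlogpos : (0:ℝ) < Real.log k := by linarith
    have hNle : (N:ℝ) ≤ (k:ℝ)^2/(2*Real.log k) := Nat.floor_le (by positivity)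
    have hNk2 : (N:ℝ) ≤ (k:ℝ)^2/2 := by
      refine le_trans hNle ?_
      apply div_le_div_of_nonneg_left (by positivity) (by norm_num) (by linarith)
    have hNpos : 0 < N := by omega
    have hNR : (0:ℝ) < N := by exact_mod_cast hNpos
    have hlogN : Real.log k ≤ ((k:ℝ)^2/2)/(N:ℝ) := by
      rw [le_div_iff₀ hNR]
      rw [le_div_iff₀ (by positivity)] at hNle
      linarith
    have hexpN : Real.exp (-(((k:ℝ)^2/2)/(N:ℝ))) ≤ 1/(k:ℝ) := by
      calc Real.exp (-(((k:ℝ)^2/2)/(N:ℝ))) ≤ Real.exp (-Real.log k) :=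
            Real.exp_le_exp.mpr (neg_le_neg hlogN)
        _ = 1/(k:ℝ) := by rw [Real.exp_neg, Real.exp_log hkpos, one_div]
    have hterm : ∀ n ∈ Finset.Icc k N,
        (1/(4+κ))^n * (W n x : ℝ) ≤ (2/3*Real.exp 1) * (1/((N:ℝ)*(k:ℝ))) := by
      intro n hn
      obtain ⟨hkn, hnN⟩ := Finset.mem_Icc.mp hn
      have hn1 : 1 ≤ n := by omega
      have hnRR : (0:ℝ) < n := by exact_mod_cast hn1
      have hWb := W_bound n hn1 x
      have hratio : (1/(4+κ))^n * (4:ℝ)^n ≤ 1 := by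
        rw [← mul_pow]
        apply pow_le_one₀ (by positivity)
        rw [one_div, inv_mul_eq_div, div_le_one (by linarith)]
        linarith
      have hmono : Real.exp (-(((k:ℝ)^2/2)/(n:ℝ)))/(n:ℝ)
          ≤ Real.exp (-(((k:ℝ)^2/2)/(N:ℝ)))/(N:ℝ) := by
        apply exp_div_mono hnRR (by exact_mod_cast hnN) hNk2
      calc (1/(4+κ))^n * (W n x : ℝ)
          ≤ (1/(4+κ))^n * (2/3 * Real.exp 1 * 4^n / n * Real.exp (-(((k:ℝ))^2/(2*(n:ℝ))))) := by
            apply mul_le_mul_of_nonneg_left hWb (by positivity)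
        _ = ((1/(4+κ))^n * 4^n) * ((2/3*Real.exp 1) * (Real.exp (-(((k:ℝ)^2/2)/(n:ℝ)))/(n:ℝ))) := by
            rw [show ((k:ℝ))^2/(2*(n:ℝ)) = ((k:ℝ)^2/2)/(n:ℝ) by ring]
            ring
        _ ≤ 1 * ((2/3*Real.exp 1) * (Real.exp (-(((k:ℝ)^2/2)/(N:ℝ)))/(N:ℝ))) := by
            apply mul_le_mul hratio (mul_le_mul_of_nonneg_left hmono (by positivity))
              (by positivity) (by norm_num)
        _ ≤ (2/3*Real.exp 1) * (1/((N:ℝ)*(k:ℝ))) := by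
            rw [one_mul]
            apply mul_le_mul_of_nonneg_left _ (by positivity)
            rw [div_le_iff₀ hNR] at *
            calc Real.exp (-(((k:ℝ)^2/2)/(N:ℝ))) ≤ 1/(k:ℝ) := hexpN
              _ = 1/((N:ℝ)*(k:ℝ)) * N := by field_simp
    calc (∑ n ∈ Finset.Icc k N, (1/(4+κ))^n * (W n x : ℝ))
        ≤ (Finset.Icc k N).card • ((2/3*Real.exp 1) * (1/((N:ℝ)*(k:ℝ)))) :=
          Finset.sum_le_card_nsmul _ _ _ hterm
      _ = ((N + 1 - k : ℕ) : ℝ) * ((2/3*Real.exp 1) * (1/((N:ℝ)*(k:ℝ)))) := by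
          rw [Nat.card_Icc, nsmul_eq_mul]
      _ ≤ (N:ℝ) * ((2/3*Real.exp 1) * (1/((N:ℝ)*(k:ℝ)))) := by
          apply mul_le_mul_of_nonneg_right _ (by positivity)
          have : N + 1 - k ≤ N := by omega
          exact_mod_cast this
      _ = (2/3*Real.exp 1) / (k:ℝ) := by field_simp
      _ ≤ 3 / (k:ℝ) := by
          have he : Real.exp 1 ≤ 2.7182818286 := le_of_lt Real.exp_one_lt_d9
          gcongr
          linarith
end
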